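/- Let T be a finite rooted tree and M a subset of its vertices. Let M' be the least common ancestor closure of M, i.e., the set of all least common ancestors of pairs (possibly equal) of vertices of M. Then |M'| ≤ 2|M|, and every connected component C of T − M' has at most 2 neighbours in M' (i.e., |N_T(C)| ≤ 2). -/

import Mathlib

open SimpleGraph

variable {V : Type*}

/-- In a tree `T` rooted at `root`, vertex `u` is an ancestor of `v` if `u` lies on
the (unique) path from `root` to `v`. -/
def IsAncestor (T : SimpleGraph V) (root u v : V) : Prop :=
  ∀ p : T.Path root v, u ∈ p.1.support

/-- `w` is a least common ancestor of `u` and `v` in the tree `T` rooted at `root`: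
`w` is a common ancestor of `u` and `v`, and every common ancestor of `u` and `v`
is an ancestor of `w`. -/
def IsLCA (T : SimpleGraph V) (root w u v : V) : Prop :=
  IsAncestor T root w u ∧ IsAncestor T root w v ∧
    ∀ z : V, IsAncestor T root z u → IsAncestor T root z v → IsAncestor T root z w

/-- The least common ancestor closure of a set `M`. -/
def lcaClosure (T : SimpleGraph V) (root : V) (M : Set V) : Set V :=
  {w | ∃ u ∈ M, ∃ v ∈ M, IsLCA T root w u v}

namespace LCAProof

open SimpleGraph Walk

variable {T : SimpleGraph V} {root : V}

/-- The unique path between two vertices of a tree. -/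
noncomputable def thePath (hT : T.IsTree) (u v : V) : T.Walk u v :=
  (hT.existsUnique_path u v).choose

lemma thePath_isPath (hT : T.IsTree) (u v : V) : (thePath hT u v).IsPath :=
  (hT.existsUnique_path u v).choose_spec.1

lemma thePath_unique (hT : T.IsTree) {u v : V} {p : T.Walk u v} (hp : p.IsPath) :
    p = thePath hT u v :=
  (hT.existsUnique_path u v).choose_spec.2 p hp

lemma isAncestor_iff (hT : T.IsTree) {u v : V} :
    IsAncestor T root u v ↔ u ∈ (thePath hT root v).support := by
  constructor
  · intro h
    exact h ⟨thePath hT root v, thePath_isPath hT root v⟩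
  · intro h p
    rwa [thePath_unique hT p.2]

lemma isAncestor_refl (v : V) : IsAncestor T root v v := fun p => p.1.end_mem_support

lemma isAncestor_root (v : V) : IsAncestor T root root v := fun p => p.1.start_mem_support

lemma thePath_takeUntil [DecidableEq V] (hT : T.IsTree) {v u : V}
    (h : u ∈ (thePath hT root v).support) :
    (thePath hT root v).takeUntil u h = thePath hT root u :=
  thePath_unique hT ((thePath_isPath hT root v).takeUntil h)

lemma isAncestor_trans (hT : T.IsTree) {z u v : V} (h1 : IsAncestor T root z u)
    (h2 : IsAncestor T root u v) : IsAncestor T root z v := by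
  classical
  rw [isAncestor_iff hT] at h1 h2 ⊢
  rw [← thePath_takeUntil hT h2] at h1
  exact (thePath hT root v).support_takeUntil_subset h2 h1

/-- Every vertex on the part of the root-path after `w` has `w` as an ancestor. -/
lemma ancestor_of_mem_dropUntil [DecidableEq V] (hT : T.IsTree) {v w z : V}
    (h : w ∈ (thePath hT root v).support)
    (hz : z ∈ ((thePath hT root v).dropUntil w h).support) :
    IsAncestor T root w z := by
  set p := thePath hT root v with hp
  set d := p.dropUntil w h with hd
  set q : T.Walk root z := (p.takeUntil w h).append (d.takeUntil z hz) with hq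
  have hqsupp : q.support = (p.takeUntil w h).support ++ (d.takeUntil z hz).support.tail := by
    rw [hq]; exact support_append _ _
  have hpsupp : p.support = (p.takeUntil w h).support ++ d.support.tail := by
    conv_lhs => rw [← take_spec p h]
    exact support_append _ _
  have hdsupp : d.support.tail
      = (d.takeUntil z hz).support.tail ++ (d.dropUntil z hz).support.tail := by
    have h1 := congrArg Walk.support (take_spec d hz)
    rw [support_append] at h1
    conv_lhs => rw [← h1, (d.takeUntil z hz).support_eq_cons]
    rfl
  have hsub : q.support.Sublist p.support := by
    rw [hqsupp, hpsupp, hdsupp, ← List.append_assoc]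
    exact List.sublist_append_left _ _
  have hqpath : q.IsPath := by
    rw [isPath_def]
    exact hsub.nodup ((thePath_isPath hT root v).support_nodup)
  have hwq : w ∈ q.support := by
    rw [hqsupp]
    exact List.mem_append_left _ (p.takeUntil w h).end_mem_support
  rw [isAncestor_iff hT, ← thePath_unique hT hqpath]
  exact hwq

lemma isAncestor_total (hT : T.IsTree) {u w x : V} (hu : IsAncestor T root u x)
    (hw : IsAncestor T root w x) :
    IsAncestor T root u w ∨ IsAncestor T root w u := by
  classical
  rw [isAncestor_iff hT] at hu hw
  set p := thePath hT root x with hp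
  rw [← take_spec p hw, mem_support_append_iff] at hu
  rcases hu with hu | hu
  · left
    rw [isAncestor_iff hT, ← thePath_takeUntil hT hw]
    exact hu
  · right
    exact ancestor_of_mem_dropUntil hT hw hu

lemma isAncestor_antisymm (hT : T.IsTree) {u w : V} (h1 : IsAncestor T root u w)
    (h2 : IsAncestor T root w u) : u = w := by
  classical
  rw [isAncestor_iff hT] at h2
  set p := thePath hT root u with hp
  have h1' : u ∈ (p.takeUntil w h2).support := by
    rw [thePath_takeUntil hT h2]
    exact (isAncestor_iff hT).1 h1
  have hnodup : ((p.takeUntil w h2).support ++ (p.dropUntil w h2).support.tail).Nodup := by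
    rw [← support_append, take_spec p h2]
    exact (thePath_isPath hT root u).support_nodup
  have hu2 : u ∈ (p.dropUntil w h2).support := (p.dropUntil w h2).end_mem_support
  rw [(p.dropUntil w h2).support_eq_cons, List.mem_cons] at hu2
  rcases hu2 with h | h
  · exact h
  · exact absurd h ((List.disjoint_of_nodup_append hnodup) h1')

/-- A finite nonempty set of ancestors of a fixed vertex has a maximum. -/
lemma exists_max (hT : T.IsTree) (a : V) (f : Finset V) :
    f.Nonempty → (∀ x ∈ f, IsAncestor T root x a) →
    ∃ w ∈ f, ∀ z ∈ f, IsAncestor T root z w := by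
  classical
  induction f using Finset.induction_on with
  | empty => intro h _; simp at h
  | @insert x s hx ih =>
    intro _ hanc
    rcases s.eq_empty_or_nonempty with rfl | hs
    · refine ⟨x, by simp, ?_⟩
      intro z hz
      simp only [Finset.mem_insert, Finset.notMem_empty, or_false] at hz
      subst hz
      exact isAncestor_refl z
    · obtain ⟨w, hw, hmax⟩ := ih hs (fun y hy => hanc y (Finset.mem_insert_of_mem hy))
      rcases isAncestor_total hT (hanc x (Finset.mem_insert_self x s))
          (hanc w (Finset.mem_insert_of_mem hw)) with h | h
      · refine ⟨w, Finset.mem_insert_of_mem hw, ?_⟩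
        intro z hz
        rcases Finset.mem_insert.1 hz with rfl | hz
        · exact h
        · exact hmax z hz
      · refine ⟨x, Finset.mem_insert_self _ _, ?_⟩
        intro z hz
        rcases Finset.mem_insert.1 hz with rfl | hz
        · exact isAncestor_refl z
        · exact isAncestor_trans hT (hmax z hz) h

lemma exists_isLCA [Fintype V] (hT : T.IsTree) (u v : V) : ∃ w, IsLCA T root w u v := by
  classical
  set S : Set V := {z | IsAncestor T root z u ∧ IsAncestor T root z v} with hS
  have hfin : S.Finite := Set.toFinite _
  have hne : hfin.toFinset.Nonempty := ⟨root, by simp [hS, isAncestor_root]⟩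
  obtain ⟨w, hw, hmax⟩ := exists_max hT u hfin.toFinset hne
      (fun x hx => ((Set.Finite.mem_toFinset hfin).1 hx).1)
  rw [Set.Finite.mem_toFinset hfin] at hw
  exact ⟨w, hw.1, hw.2, fun z hzu hzv => hmax z ((Set.Finite.mem_toFinset hfin).2 ⟨hzu, hzv⟩)⟩

lemma IsLCA.unique (hT : T.IsTree) {w w' u v : V} (h : IsLCA T root w u v)
    (h' : IsLCA T root w' u v) : w = w' :=
  isAncestor_antisymm hT (h'.2.2 w h.1 h.2.1) (h.2.2 w' h'.1 h'.2.1)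

lemma isLCA_self (v : V) : IsLCA T root v v v :=
  ⟨isAncestor_refl v, isAncestor_refl v, fun _ hz _ => hz⟩

lemma isLCA_left {u v : V} (h : IsAncestor T root u v) : IsLCA T root u u v :=
  ⟨isAncestor_refl u, h, fun _ hz _ => hz⟩

lemma isLCA_symm {w u v : V} (h : IsLCA T root w u v) : IsLCA T root w v u :=
  ⟨h.2.1, h.1, fun z h1 h2 => h.2.2 z h2 h1⟩

lemma self_mem_lcaClosure {M : Set V} {m : V} (hm : m ∈ M) : m ∈ lcaClosure T root M :=
  ⟨m, hm, m, hm, isLCA_self m⟩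

/-- The LCA closure is closed under taking LCAs. -/
lemma lca_mem_lcaClosure (hT : T.IsTree) {M : Set V} {m₁ m₂ L : V}
    (h1 : m₁ ∈ lcaClosure T root M) (h2 : m₂ ∈ lcaClosure T root M)
    (hL : IsLCA T root L m₁ m₂) : L ∈ lcaClosure T root M := by
  obtain ⟨a, ha, b, hb, hab⟩ := h1
  obtain ⟨c, hc, d, hd, hcd⟩ := h2
  by_cases h12 : IsAncestor T root m₁ m₂
  · have hLm : L = m₁ := IsLCA.unique hT hL (isLCA_left h12)
    rw [hLm]
    exact ⟨a, ha, b, hb, hab⟩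
  by_cases h21 : IsAncestor T root m₂ m₁
  · have hLm : L = m₂ := IsLCA.unique hT hL (isLCA_symm (isLCA_left h21))
    rw [hLm]
    exact ⟨c, hc, d, hd, hcd⟩
  refine ⟨a, ha, c, hc, isAncestor_trans hT hL.1 hab.1, isAncestor_trans hT hL.2.1 hcd.1, ?_⟩
  intro z hza hzc
  rcases isAncestor_total hT hza hab.1 with hz1 | hz1
  · rcases isAncestor_total hT hzc hcd.1 with hz2 | hz2
    · exact hL.2.2 z hz1 hz2
    · exact absurd (isAncestor_trans hT hz2 hz1) h21
  · rcases isAncestor_total hT hzc hcd.1 with hz2 | hz2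
    · exact absurd (isAncestor_trans hT hz1 hz2) h12
    · rcases isAncestor_total hT hz1 hz2 with h | h
      · exact absurd h h12
      · exact absurd h h21

/-- The LCA of `u` and `v` lies on the path from `u` to `v`. -/
lemma lca_mem_thePath (hT : T.IsTree) {L u v : V} (hL : IsLCA T root L u v) :
    L ∈ (thePath hT u v).support := by
  classical
  have h1 : L ∈ (thePath hT root u).support := (isAncestor_iff hT).1 hL.1
  have h2 : L ∈ (thePath hT root v).support := (isAncestor_iff hT).1 hL.2.1
  set d1 := (thePath hT root u).dropUntil L h1 with hd1
  set d2 := (thePath hT root v).dropUntil L h2 with hd2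
  have hd1p : d1.IsPath := (thePath_isPath hT root u).dropUntil h1
  have hd2p : d2.IsPath := (thePath_isPath hT root v).dropUntil h2
  have hdisj : ∀ z, z ∈ d1.support → z ∈ d2.support → z = L := by
    intro z hz1 hz2
    have hzu : IsAncestor T root z u := by
      rw [isAncestor_iff hT]
      exact (thePath hT root u).support_dropUntil_subset h1 hz1
    have hzv : IsAncestor T root z v := by
      rw [isAncestor_iff hT]
      exact (thePath hT root v).support_dropUntil_subset h2 hz2
    exact isAncestor_antisymm hT (hL.2.2 z hzu hzv) (ancestor_of_mem_dropUntil hT h1 hz1)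
  set q : T.Walk u v := d1.reverse.append d2 with hq
  have hqsupp : q.support = d1.support.reverse ++ d2.support.tail := by
    rw [hq, support_append, support_reverse]
  have hqpath : q.IsPath := by
    rw [isPath_def, hqsupp]
    refine List.Nodup.append (List.nodup_reverse.2 hd1p.support_nodup) ?_ ?_
    · have := hd2p.support_nodup
      rw [d2.support_eq_cons] at this
      exact (List.nodup_cons.1 this).2
    · intro x hx1 hx2
      have hx1' : x ∈ d1.support := List.mem_reverse.1 hx1
      have hx2' : x ∈ d2.support := by
        rw [d2.support_eq_cons]
        exact List.mem_cons_of_mem _ hx2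
      have hxL : x = L := hdisj x hx1' hx2'
      subst hxL
      have := hd2p.support_nodup
      rw [d2.support_eq_cons, List.nodup_cons] at this
      exact this.1 hx2
  rw [← thePath_unique hT hqpath, hqsupp]
  exact List.mem_append_left _ (List.mem_reverse.2 d1.start_mem_support)

/-- If `m₁ ≼ m₂ ≼ m₃` with `m₂ ≠ m₁`, then `m₂` lies on the path from `m₁` to `m₃`. -/
lemma middle_mem_thePath (hT : T.IsTree) {m₁ m₂ m₃ : V}
    (h12 : IsAncestor T root m₁ m₂) (h23 : IsAncestor T root m₂ m₃) (hne : m₂ ≠ m₁) :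
    m₂ ∈ (thePath hT m₁ m₃).support := by
  classical
  have h13 : IsAncestor T root m₁ m₃ := isAncestor_trans hT h12 h23
  have h1 : m₁ ∈ (thePath hT root m₃).support := (isAncestor_iff hT).1 h13
  have h2 : m₂ ∈ (thePath hT root m₃).support := (isAncestor_iff hT).1 h23
  set p := thePath hT root m₃ with hp
  have hdp : (p.dropUntil m₁ h1).IsPath := (thePath_isPath hT root m₃).dropUntil h1
  rw [← thePath_unique hT hdp]
  rw [← take_spec p h1, mem_support_append_iff] at h2
  rcases h2 with h2 | h2
  · exfalso
    apply hne
    apply isAncestor_antisymm hT _ h12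
    rw [isAncestor_iff hT, ← thePath_takeUntil hT h1]
    exact h2
  · exact h2

/-- The unique path is supported inside the support of any walk with the same endpoints. -/
lemma thePath_support_subset (hT : T.IsTree) {u v : V} (W : T.Walk u v) :
    (thePath hT u v).support ⊆ W.support := by
  classical
  rw [← thePath_unique hT W.bypass_isPath]
  exact W.support_bypass_subset

/-- Part 1: the key insertion lemma. -/
lemma lcaClosure_insert [Fintype V] (hT : T.IsTree) (a : V) {s : Set V} (hs : s.Nonempty) :
    ∃ w, lcaClosure T root (insert a s) ⊆ insert a (insert w (lcaClosure T root s)) := by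
  classical
  -- the set of LCAs of `a` with elements of `s`
  set S : Set V := {w | ∃ u ∈ s, IsLCA T root w a u} with hS
  have hfin : S.Finite := Set.toFinite _
  obtain ⟨u₀, hu₀⟩ := hs
  obtain ⟨w₀, hw₀⟩ := exists_isLCA (root := root) hT a u₀
  have hne : hfin.toFinset.Nonempty := ⟨w₀, by
    rw [Set.Finite.mem_toFinset]; exact ⟨u₀, hu₀, hw₀⟩⟩
  obtain ⟨w, hwmem, hwmax⟩ := exists_max hT a hfin.toFinset hne (by
    intro x hx
    rw [Set.Finite.mem_toFinset] at hx
    obtain ⟨u, _, hu⟩ := hx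
    exact hu.1)
  rw [Set.Finite.mem_toFinset] at hwmem
  obtain ⟨ustar, hustar, hwstar⟩ := hwmem
  refine ⟨w, ?_⟩
  -- main claim: lca(a, v) for v ∈ s is either w or in lcaClosure s
  have key : ∀ x v, v ∈ s → IsLCA T root x a v →
      x ∈ insert a (insert w (lcaClosure T root s)) := by
    intro x v hv hx
    by_cases hxw : x = w
    · rw [hxw]
      exact Set.mem_insert_of_mem _ (Set.mem_insert _ _)
    · refine Set.mem_insert_of_mem _ (Set.mem_insert_of_mem _ ?_)
      refine ⟨v, hv, ustar, hustar, ?_⟩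
      have hxS : x ∈ S := ⟨v, hv, hx⟩
      have hxw' : IsAncestor T root x w := hwmax x ((Set.Finite.mem_toFinset hfin).2 hxS)
      refine ⟨hx.2.1, isAncestor_trans hT hxw' hwstar.2.1, ?_⟩
      intro z hzv hzu
      rcases isAncestor_total hT hzv hx.2.1 with h | h
      · exact h
      · rcases isAncestor_total hT hzu hwstar.2.1 with h' | h'
        · exact hx.2.2 z (isAncestor_trans hT h' hwstar.1) hzv
        · exfalso
          apply hxw
          exact isAncestor_antisymm hT hxw'
            (hx.2.2 w hwstar.1 (isAncestor_trans hT h' hzv))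
  intro x hx
  obtain ⟨p, hp, q, hq, hpq⟩ := hx
  rcases hp with hp | hp
  · rcases hq with hq | hq
    · have hxa : x = a := by
        rw [hp, hq] at hpq
        exact IsLCA.unique hT hpq (isLCA_self a)
      rw [hxa]
      exact Set.mem_insert _ _
    · rw [hp] at hpq
      exact key x q hq hpq
  · rcases hq with hq | hq
    · rw [hq] at hpq
      exact key x p hp (isLCA_symm hpq)
    · exact Set.mem_insert_of_mem _ (Set.mem_insert_of_mem _ ⟨p, hp, q, hq, hpq⟩)

lemma lcaClosure_card [Fintype V] (hT : T.IsTree) (root : V) (M : Set V) :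
    (lcaClosure T root M).ncard ≤ 2 * M.ncard := by
  classical
  refine Set.Finite.induction_on (motive := fun s _ => (lcaClosure T root s).ncard ≤ 2 * s.ncard) M (Set.toFinite M) ?_ (@fun a s ha hsfin ih => ?_)
  · have : lcaClosure T root (∅ : Set V) = ∅ := by
      ext x
      simp [lcaClosure]
    simp [this]
  · rcases s.eq_empty_or_nonempty with rfl | hs
    · have hsub : lcaClosure T root (insert a (∅ : Set V)) ⊆ {a} := by
        intro x hx
        obtain ⟨p, hp, q, hq, hpq⟩ := hx
        simp only [Set.mem_insert_iff, Set.mem_empty_iff_false, or_false] at hp hq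
        have hxa : x = a := by
          rw [hp, hq] at hpq
          exact IsLCA.unique hT hpq (isLCA_self a)
        exact hxa
      calc (lcaClosure T root (insert a ∅)).ncard ≤ ({a} : Set V).ncard :=
            Set.ncard_le_ncard hsub (Set.toFinite _)
        _ = 1 := Set.ncard_singleton a
        _ ≤ 2 * (insert a (∅ : Set V)).ncard := by
            simp
    · obtain ⟨w, hw⟩ := lcaClosure_insert (root := root) hT a hs
      have h1 : (lcaClosure T root (insert a s)).ncard ≤
          (insert a (insert w (lcaClosure T root s))).ncard :=
        Set.ncard_le_ncard hw (Set.toFinite _)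
      have h2 : (insert a (insert w (lcaClosure T root s))).ncard ≤
          (insert w (lcaClosure T root s)).ncard + 1 := Set.ncard_insert_le _ _
      have h3 : (insert w (lcaClosure T root s)).ncard ≤
          (lcaClosure T root s).ncard + 1 := Set.ncard_insert_le _ _
      have h4 : (insert a s).ncard = 1 + s.ncard := by
        rw [Set.ncard_insert_of_notMem ha hsfin]
        omega
      omega

end LCAProof

open LCAProof in
/-- if `T` is a finite rooted tree, `M` a set of vertices and `M'` its
LCA-closure, then `|M'| ≤ 2|M|` and every connected component `C` of `T - M'` has at
most two neighbours in `M'`. -/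
theorem lcaClosure_card_and_components [Fintype V] (T : SimpleGraph V) (hT : T.IsTree)
    (root : V) (M : Set V) :
    (lcaClosure T root M).ncard ≤ 2 * M.ncard ∧
    ∀ C : (T.induce ((lcaClosure T root M)ᶜ : Set V)).ConnectedComponent,
      {m ∈ lcaClosure T root M |
        ∃ x : ((lcaClosure T root M)ᶜ : Set V),
          (T.induce ((lcaClosure T root M)ᶜ : Set V)).connectedComponentMk x = C ∧
          T.Adj m x}.ncard ≤ 2 := by
  classical
  refine ⟨lcaClosure_card hT root M, ?_⟩
  intro C
  -- a walk between two neighbours of C avoiding M' except at endpoints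
  have walkAvoid : ∀ (m₁ m₂ : V) (x₁ x₂ : ((lcaClosure T root M)ᶜ : Set V)),
      (T.induce ((lcaClosure T root M)ᶜ : Set V)).connectedComponentMk x₁ =
        (T.induce ((lcaClosure T root M)ᶜ : Set V)).connectedComponentMk x₂ →
      T.Adj m₁ x₁ → T.Adj m₂ x₂ →
      ∃ W : T.Walk m₁ m₂, ∀ z ∈ W.support,
        z = m₁ ∨ z = m₂ ∨ z ∉ lcaClosure T root M := by
    intro m₁ m₂ x₁ x₂ hcc hadj₁ hadj₂
    obtain ⟨p'⟩ := SimpleGraph.ConnectedComponent.exact hcc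
    have hadj₂' : T.Adj ((SimpleGraph.Embedding.induce (G := T)
        ((lcaClosure T root M)ᶜ : Set V)).toHom x₂) m₂ := hadj₂.symm
    have hadj₁' : T.Adj m₁ ((SimpleGraph.Embedding.induce (G := T)
        ((lcaClosure T root M)ᶜ : Set V)).toHom x₁) := hadj₁
    refine ⟨Walk.cons hadj₁'
      ((p'.map (SimpleGraph.Embedding.induce
        ((lcaClosure T root M)ᶜ : Set V)).toHom).concat hadj₂'), ?_⟩
    intro z hz
    rw [Walk.support_cons, List.mem_cons] at hz
    rcases hz with rfl | hz
    · exact Or.inl rfl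
    rw [Walk.support_concat, List.mem_append] at hz
    rcases hz with hz | hz
    · right; right
      rw [Walk.support_map, List.mem_map] at hz
      obtain ⟨y, _, rfl⟩ := hz
      exact y.2
    · simp only [List.mem_singleton] at hz
      exact Or.inr (Or.inl hz)
  -- any two neighbours of C are comparable
  have comp : ∀ (m₁ m₂ : V) (x₁ x₂ : ((lcaClosure T root M)ᶜ : Set V)),
      m₁ ∈ lcaClosure T root M → m₂ ∈ lcaClosure T root M →
      (T.induce ((lcaClosure T root M)ᶜ : Set V)).connectedComponentMk x₁ =
        (T.induce ((lcaClosure T root M)ᶜ : Set V)).connectedComponentMk x₂ →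
      T.Adj m₁ x₁ → T.Adj m₂ x₂ →
      IsAncestor T root m₁ m₂ ∨ IsAncestor T root m₂ m₁ := by
    intro m₁ m₂ x₁ x₂ hm₁ hm₂ hcc hadj₁ hadj₂
    obtain ⟨L, hL⟩ := exists_isLCA (root := root) hT m₁ m₂
    have hLM : L ∈ lcaClosure T root M := lca_mem_lcaClosure hT hm₁ hm₂ hL
    obtain ⟨W, hW⟩ := walkAvoid m₁ m₂ x₁ x₂ hcc hadj₁ hadj₂
    have hLW : L ∈ W.support :=
      thePath_support_subset hT W (lca_mem_thePath hT hL)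
    rcases hW L hLW with rfl | rfl | h
    · exact Or.inl hL.2.1
    · exact Or.inr hL.1
    · exact absurd hLM h
  -- no neighbour lies strictly between two others
  have no_middle : ∀ (x y z : V) (u₁ u₂ : ((lcaClosure T root M)ᶜ : Set V)),
      y ∈ lcaClosure T root M →
      (T.induce ((lcaClosure T root M)ᶜ : Set V)).connectedComponentMk u₁ =
        (T.induce ((lcaClosure T root M)ᶜ : Set V)).connectedComponentMk u₂ →
      T.Adj x u₁ → T.Adj z u₂ →
      IsAncestor T root x y → IsAncestor T root y z → y ≠ x → y ≠ z → False := by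
    intro x y z u₁ u₂ hy hcc hadj₁ hadj₂ hxy hyz hyx hyz'
    have hmem : y ∈ (thePath hT x z).support := middle_mem_thePath hT hxy hyz hyx
    obtain ⟨W, hW⟩ := walkAvoid x z u₁ u₂ hcc hadj₁ hadj₂
    have : y ∈ W.support := thePath_support_subset hT W hmem
    rcases hW y this with h | h | h
    · exact hyx h
    · exact hyz' h
    · exact h hy
  by_contra hcon
  push_neg at hcon
  obtain ⟨a, b, c, ha, hb, hc, hab, hac, hbc⟩ :=
    (Set.two_lt_ncard_iff (Set.toFinite _)).1 hcon
  obtain ⟨haM, xa, hxa, hadja⟩ := ha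
  obtain ⟨hbM, xb, hxb, hadjb⟩ := hb
  obtain ⟨hcM, xc, hxc, hadjc⟩ := hc
  have hccab := hxa.trans hxb.symm
  have hccac := hxa.trans hxc.symm
  have hccbc := hxb.trans hxc.symm
  rcases comp a b xa xb haM hbM hccab hadja hadjb with h1 | h1
  · rcases comp b c xb xc hbM hcM hccbc hadjb hadjc with h2 | h2
    · exact no_middle a b c xa xc hbM hccac hadja hadjc h1 h2 (Ne.symm hab) hbc
    · rcases comp a c xa xc haM hcM hccac hadja hadjc with h3 | h3
      · exact no_middle a c b xa xb hcM hccab hadja hadjb h3 h2 (Ne.symm hac) (Ne.symm hbc)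
      · exact no_middle c a b xc xb haM (hxc.trans hxb.symm) hadjc hadjb h3 h1 hac hab
  · rcases comp a c xa xc haM hcM hccac hadja hadjc with h2 | h2
    · exact no_middle b a c xb xc haM (hxb.trans hxc.symm) hadjb hadjc h1 h2 hab hac
    · rcases comp c b xc xb hcM hbM (hxc.trans hxb.symm) hadjc hadjb with h3 | h3
      · exact no_middle c b a xc xa hbM hccac.symm hadjc hadja h3 h1 hbc (Ne.symm hab)
      · exact no_middle b c a xb xa hcM hccab.symm hadjb hadja h3 h2 (Ne.symm hbc) (Ne.symm hac)
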